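/- Let n ≥ 2 and let K ⊆ ℝⁿ be a convex body with 0 in its interior. Then there exists an (n−1)-dimensional linear subspace H ⊆ ℝⁿ such that the centroid of the (n−1)-dimensional convex body K ∩ H (computed with respect to (n−1)-dimensional Lebesgue measure on H) is the origin. -/

import Mathlib

open Set Metric MeasureTheory

/-- The centroid of a set in a finite-dimensional inner-product space (e.g. a linear
subspace `H ⊆ ℝⁿ`), computed with respect to the Lebesgue measure of that space. -/
noncomputable def centroidIn {W : Type*} [NormedAddCommGroup W] [InnerProductSpace ℝ W]
    [FiniteDimensional ℝ W] [MeasurableSpace W] [BorelSpace W] (L : Set W) : W :=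
  (volume L).toReal⁻¹ • ∫ x in L, x

open Filter
open scoped RealInnerProductSpace NNReal ENNReal Topology

set_option linter.unusedSectionVars false

section Core
variable {W : Type*} [NormedAddCommGroup W] [InnerProductSpace ℝ W]
  [FiniteDimensional ℝ W] [MeasurableSpace W] [BorelSpace W]

lemma section_interior_aux {Q : Set (W × ℝ)} (hconv : Convex ℝ Q)
    (h0 : (0 : W × ℝ) ∈ interior Q)
    {y : W} (hy : y ∈ interior {z : W | (z, 0) ∈ Q}) : (y, 0) ∈ interior Q := by
  have hcont : ContinuousAt (fun r : ℝ => r • y) 1 := by fun_prop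
  have hmem : (fun r : ℝ => r • y) 1 ∈ interior {z : W | (z, 0) ∈ Q} := by simpa using hy
  have hev : ∀ᶠ r : ℝ in 𝓝 1, r • y ∈ interior {z : W | (z, 0) ∈ Q} :=
    hcont (isOpen_interior.mem_nhds hmem)
  obtain ⟨r, hrS, hr1⟩ :=
    ((hev.filter_mono nhdsWithin_le_nhds).and (self_mem_nhdsWithin (s := Ioi (1:ℝ)))).exists
  have hr1' : (1:ℝ) < r := hr1
  have hr0 : (0:ℝ) < r := lt_trans one_pos hr1'
  have hzQ : ((r • y, 0) : W × ℝ) ∈ Q := by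
    have := interior_subset hrS
    exact this
  have key := hconv.combo_interior_closure_mem_interior h0 (subset_closure hzQ)
    (a := 1 - r⁻¹) (b := r⁻¹) (by simp [inv_lt_one_iff₀]; right; exact hr1')
    (by positivity) (by ring)
  have : ((1 - r⁻¹) • ((0 : W × ℝ)) + r⁻¹ • ((r • y, 0) : W × ℝ)) = ((y, 0) : W × ℝ) := by
    rw [smul_zero, zero_add, Prod.smul_mk, smul_smul, inv_mul_cancel₀ (ne_of_gt hr0)]
    simp
  rwa [this] at key

end Core

section Core2
variable {W : Type*} [NormedAddCommGroup W] [InnerProductSpace ℝ W]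
  [FiniteDimensional ℝ W] [MeasurableSpace W] [BorelSpace W]

set_option maxHeartbeats 2000000 in
lemma core_estimate (Q : Set (W × ℝ)) (hQc : IsCompact Q) (hconv : Convex ℝ Q)
    (h0 : (0 : W × ℝ) ∈ interior Q) (a : W)
    (hmax : ∀ ε : ℝ, 0 < ε →
      volume {p : W × ℝ | p ∈ Q ∧ p.2 ≤ ε * ⟪p.1, a⟫} ≤
        volume {p : W × ℝ | p ∈ Q ∧ p.2 ≤ 0 * ⟪p.1, a⟫}) :
    ∫ y in {z : W | (z, 0) ∈ Q}, ⟪y, a⟫ ≤ 0 := by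
  classical
  obtain ⟨R, hRpos, hQR⟩ : ∃ r, 0 < r ∧ Q ⊆ closedBall 0 r :=
    hQc.isBounded.subset_closedBall_lt 0 0
  set S : Set W := {z : W | (z, 0) ∈ Q} with hS_def
  have hQclosed : IsClosed Q := hQc.isClosed
  have hSclosed : IsClosed S := hQclosed.preimage (Continuous.prodMk_left 0)
  -- fibers
  set I : W → Set ℝ := fun y => {t : ℝ | (y, t) ∈ Q} with hI_def
  have hIclosed : ∀ y, IsClosed (I y) := fun y => hQclosed.preimage (Continuous.prodMk_right y)
  have hIsub : ∀ y, I y ⊆ Icc (-R) R := by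
    intro y t ht
    have h1 : ‖(y, t)‖ ≤ R := by
      have := hQR ht
      simpa [mem_closedBall, dist_eq_norm] using this
    exact abs_le.1 (le_trans (norm_snd_le (y, t)) h1)
  have hIempty : ∀ y : W, y ∉ closedBall (0:W) R → I y = ∅ := by
    intro y hy
    ext t
    simp only [mem_empty_iff_false, iff_false, hI_def, mem_setOf_eq]
    intro ht
    apply hy
    have h1 : ‖(y, t)‖ ≤ R := by simpa [mem_closedBall, dist_eq_norm] using hQR ht
    have h2 : ‖y‖ ≤ R := le_trans (norm_fst_le (y, t)) h1
    simpa [mem_closedBall, dist_eq_norm] using h2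
  set ν : W → ℝ → ℝ≥0∞ := fun y s => volume (I y ∩ Iic s) with hν_def
  have hνfin : ∀ y s, ν y s ≤ ENNReal.ofReal (2 * R) := by
    intro y s
    calc ν y s ≤ volume (Icc (-R) R) :=
          measure_mono (le_trans inter_subset_left (hIsub y))
      _ = ENNReal.ofReal (2 * R) := by rw [Real.volume_Icc]; ring_nf
  have hνfin' : ∀ y s, ν y s ≠ ∞ :=
    fun y s => ne_top_of_le_ne_top ENNReal.ofReal_ne_top (hνfin y s)
  -- sets A ε and Fubini
  set A : ℝ → Set (W × ℝ) := fun ε => {p : W × ℝ | p ∈ Q ∧ p.2 ≤ ε * ⟪p.1, a⟫} with hA_def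
  have hAclosed : ∀ ε, IsClosed (A ε) := by
    intro ε
    exact hQclosed.inter (isClosed_le continuous_snd
      (continuous_const.mul (Continuous.inner continuous_fst continuous_const)))
  have hAmeas : ∀ ε, MeasurableSet (A ε) := fun ε => (hAclosed ε).measurableSet
  have hfiber : ∀ (ε : ℝ) (y : W), Prod.mk y ⁻¹' (A ε) = I y ∩ Iic (ε * ⟪y, a⟫) := by
    intro ε y
    ext t
    simp [hA_def, hI_def]
  have hvolA : ∀ ε : ℝ, volume (A ε) = ∫⁻ y, ν y (ε * ⟪y, a⟫) := by
    intro ε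
    rw [MeasureTheory.Measure.volume_eq_prod, Measure.prod_apply (hAmeas ε)]
    exact lintegral_congr fun y => by rw [hfiber]
  have hAfin : ∀ ε : ℝ, volume (A ε) ≠ ∞ := fun ε =>
    ne_top_of_le_ne_top hQc.measure_lt_top.ne (measure_mono (fun p hp => hp.1))
  have hνmeas : ∀ ε : ℝ, Measurable (fun y => ν y (ε * ⟪y, a⟫)) := by
    intro ε
    have heq : (fun y => ν y (ε * ⟪y, a⟫)) = fun y => volume (Prod.mk y ⁻¹' (A ε)) := by
      funext y; rw [hfiber]
    rw [heq]
    exact measurable_measure_prodMk_left (hAmeas ε)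
  have hg_int : ∀ ε : ℝ, Integrable (fun y => (ν y (ε * ⟪y, a⟫)).toReal) := by
    intro ε
    apply integrable_toReal_of_lintegral_ne_top ((hνmeas ε).aemeasurable)
    rw [← hvolA ε]; exact hAfin ε
  have hg_eq : ∀ ε : ℝ, ∫ y, (ν y (ε * ⟪y, a⟫)).toReal = (volume (A ε)).toReal := by
    intro ε
    rw [integral_toReal ((hνmeas ε).aemeasurable)
      (ae_of_all _ fun y => (hνfin' y _).lt_top), ← hvolA ε]
  have hg_int0 : Integrable (fun y => (ν y 0).toReal) := by
    have := hg_int 0; simpa using this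
  have hg_eq0 : ∫ y, (ν y 0).toReal = (volume (A 0)).toReal := by
    have := hg_eq 0; simpa using this
  -- Lipschitz bound
  have hν_mono : ∀ (y : W) {s t : ℝ}, s ≤ t → ν y s ≤ ν y t := fun y s t hst =>
    measure_mono (inter_subset_inter_right _ (Iic_subset_Iic.2 hst))
  have hν_lip : ∀ (y : W) {s t : ℝ}, s ≤ t → ν y t ≤ ν y s + ENNReal.ofReal (t - s) := by
    intro y s t hst
    have hsub : I y ∩ Iic t ⊆ (I y ∩ Iic s) ∪ Ioc s t := by
      rintro x ⟨hx1, hx2⟩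
      by_cases h : x ≤ s
      · exact Or.inl ⟨hx1, h⟩
      · exact Or.inr ⟨lt_of_not_ge h, hx2⟩
    calc ν y t ≤ volume ((I y ∩ Iic s) ∪ Ioc s t) := measure_mono hsub
      _ ≤ ν y s + volume (Ioc s t) := measure_union_le _ _
      _ = ν y s + ENNReal.ofReal (t - s) := by rw [Real.volume_Ioc]
  have hg_lip : ∀ (y : W) (s t : ℝ), |(ν y s).toReal - (ν y t).toReal| ≤ |s - t| := by
    have main : ∀ (y : W) (s t : ℝ), t ≤ s → |(ν y s).toReal - (ν y t).toReal| ≤ |s - t| := by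
      intro y s t h
      have h1 : (ν y t).toReal ≤ (ν y s).toReal := ENNReal.toReal_mono (hνfin' y s) (hν_mono y h)
      have h2 : (ν y s).toReal ≤ (ν y t).toReal + (s - t) := by
        calc (ν y s).toReal ≤ ((ν y t) + ENNReal.ofReal (s - t)).toReal :=
              ENNReal.toReal_mono
                (ENNReal.add_ne_top.2 ⟨hνfin' y t, ENNReal.ofReal_ne_top⟩) (hν_lip y h)
          _ = (ν y t).toReal + (s - t) := by
              rw [ENNReal.toReal_add (hνfin' y t) ENNReal.ofReal_ne_top,
                ENNReal.toReal_ofReal (sub_nonneg.2 h)]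
      rw [abs_of_nonneg (sub_nonneg.2 h1), abs_of_nonneg (sub_nonneg.2 h)]
      linarith
    intro y s t
    rcases le_total t s with h | h
    · exact main y s t h
    · rw [abs_sub_comm, abs_sub_comm s t]; exact main y t s h
  -- the sequence
  set e : ℕ → ℝ := fun k => ((k : ℝ) + 1)⁻¹ with he_def
  have he_pos : ∀ k, 0 < e k := fun k => by positivity
  have he_tend : Tendsto e atTop (𝓝 0) := by
    have := tendsto_one_div_add_atTop_nhds_zero_nat (𝕜 := ℝ)
    simpa [he_def, one_div] using this
  set F : ℕ → W → ℝ :=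
    fun k y => ((k:ℝ)+1) * ((ν y (e k * ⟪y, a⟫)).toReal - (ν y 0).toReal) with hF_def
  have hDk : ∀ k, ∫ y, F k y ≤ 0 := by
    intro k
    have hint : ∫ y, F k y
        = ((k:ℝ)+1) * ((volume (A (e k))).toReal - (volume (A 0)).toReal) := by
      rw [hF_def]
      rw [MeasureTheory.integral_const_mul]
      rw [integral_sub (hg_int (e k)) hg_int0, hg_eq (e k), hg_eq0]
    have hle : volume (A (e k)) ≤ volume (A 0) := hmax (e k) (he_pos k)
    have hle' : (volume (A (e k))).toReal ≤ (volume (A 0)).toReal :=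
      ENNReal.toReal_mono (hAfin 0) hle
    rw [hint]
    have hk1 : (0:ℝ) ≤ (k:ℝ)+1 := by positivity
    nlinarith
  -- dominated convergence data
  set f : W → ℝ := fun y => indicator S (fun z => ⟪z, a⟫) y with hf_def
  set bound : W → ℝ := indicator (closedBall (0:W) R) (fun y => ‖y‖ * ‖a‖) with hbound_def
  have hbound_int : Integrable bound := by
    apply MeasureTheory.IntegrableOn.integrable_indicator ?_ measurableSet_closedBall
    exact ((continuous_norm.mul continuous_const).continuousOn).integrableOn_compact
      (isCompact_closedBall 0 R)
  have hFmeas : ∀ k, AEStronglyMeasurable (F k) volume := by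
    intro k
    exact (((hg_int (e k)).sub hg_int0).aestronglyMeasurable).const_mul _
  have h_bound : ∀ k, ∀ᵐ y, ‖F k y‖ ≤ bound y := by
    intro k
    filter_upwards with y
    by_cases hy : y ∈ closedBall (0:W) R
    · rw [hbound_def, indicator_of_mem hy]
      have h1 : |(ν y (e k * ⟪y, a⟫)).toReal - (ν y 0).toReal| ≤ |e k * ⟪y, a⟫ - 0| :=
        hg_lip y _ 0
      rw [sub_zero, abs_mul, abs_of_pos (he_pos k)] at h1
      have hk1 : (0:ℝ) < (k:ℝ)+1 := by positivity
      calc ‖F k y‖ = ((k:ℝ)+1) * |(ν y (e k * ⟪y, a⟫)).toReal - (ν y 0).toReal| := by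
            rw [hF_def]; rw [Real.norm_eq_abs, abs_mul, abs_of_pos hk1]
        _ ≤ ((k:ℝ)+1) * (e k * |⟪y, a⟫|) := mul_le_mul_of_nonneg_left h1 (le_of_lt hk1)
        _ = |⟪y, a⟫| := by
            rw [← mul_assoc, he_def]
            simp only
            rw [mul_inv_cancel₀ (ne_of_gt hk1), one_mul]
        _ ≤ ‖y‖ * ‖a‖ := abs_real_inner_le_norm y a
    · have hIy : I y = ∅ := hIempty y hy
      have hz : ∀ s, ν y s = 0 := fun s => by rw [hν_def]; simp [hIy]
      simp [hF_def, hbound_def, hz, indicator_of_notMem hy]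
  have hfrontier : ∀ᵐ y : W, y ∉ frontier S := by
    have hSconv : Convex ℝ S := by
      have := hconv.linear_preimage (LinearMap.inl ℝ W ℝ)
      exact this
    have h1 : volume (frontier S) = 0 := hSconv.addHaar_frontier volume
    exact measure_eq_zero_iff_ae_notMem.mp h1
  have h_lim : ∀ᵐ y : W, Tendsto (fun k => F k y) atTop (𝓝 (f y)) := by
    filter_upwards [hfrontier] with y hy
    by_cases hyc : y ∈ closure S
    · have hyi : y ∈ interior S := by
        by_contra h
        exact hy ⟨hyc, h⟩
      have h2 := section_interior_aux hconv h0 hyi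
      rcases Metric.isOpen_iff.1 isOpen_interior _ h2 with ⟨δ, hδpos, hδ⟩
      have hIcc : ∀ t : ℝ, |t| ≤ δ/2 → t ∈ I y := by
        intro t ht
        have hmem : ((y, t) : W × ℝ) ∈ ball ((y, 0) : W × ℝ) δ := by
          rw [mem_ball]
          have hd : dist ((y, t) : W × ℝ) ((y, 0) : W × ℝ) = |t| := by
            simp [Prod.dist_eq, Real.dist_eq]
          rw [hd]; linarith
        have hQmem : ((y, t) : W × ℝ) ∈ Q := interior_subset (hδ hmem)
        exact hQmem
      have hcalc : ∀ s : ℝ, |s| ≤ δ/2 → (ν y s).toReal - (ν y 0).toReal = s := by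
        intro s hs
        have key : ∀ s₁ s₂ : ℝ, -(δ/2) ≤ s₁ → s₁ ≤ s₂ → s₂ ≤ δ/2 →
            ν y s₂ = ν y s₁ + ENNReal.ofReal (s₂ - s₁) := by
          intro s₁ s₂ hh1 hh2 hh3
          have hset : I y ∩ Iic s₂ = (I y ∩ Iic s₁) ∪ Ioc s₁ s₂ := by
            ext t
            constructor
            · rintro ⟨ht1, ht2⟩
              by_cases h : t ≤ s₁
              · exact Or.inl ⟨ht1, h⟩
              · exact Or.inr ⟨lt_of_not_ge h, ht2⟩
            · rintro (⟨ht1, ht2⟩ | ⟨ht1, ht2⟩)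
              · exact ⟨ht1, le_trans ht2 hh2⟩
              · refine ⟨hIcc t ?_, ht2⟩
                rw [abs_le]; constructor <;> linarith
          have hdisj : Disjoint (I y ∩ Iic s₁) (Ioc s₁ s₂) :=
            Disjoint.mono_left inter_subset_right (Iic_disjoint_Ioc le_rfl)
          rw [hν_def]
          simp only
          rw [hset, measure_union hdisj measurableSet_Ioc, Real.volume_Ioc]
        have habs := abs_le.1 hs
        rcases le_or_gt 0 s with hs0 | hs0
        · have hk := key 0 s (by linarith) hs0 habs.2
          rw [hk, ENNReal.toReal_add (hνfin' y 0) ENNReal.ofReal_ne_top,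
            ENNReal.toReal_ofReal (by linarith)]
          ring
        · have hk := key s 0 habs.1 (le_of_lt hs0) (by linarith)
          rw [hk, ENNReal.toReal_add (hνfin' y s) ENNReal.ofReal_ne_top,
            ENNReal.toReal_ofReal (by linarith)] at *
          linarith
      have hev : ∀ᶠ k in atTop, F k y = ⟪y, a⟫ := by
        have htend : Tendsto (fun k => e k * |⟪y, a⟫|) atTop (𝓝 0) := by
          simpa using he_tend.mul_const |⟪y, a⟫|
        have hev2 : ∀ᶠ k in atTop, e k * |⟪y, a⟫| < δ/2 :=
          htend.eventually_lt_const (by positivity)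
        filter_upwards [hev2] with k hk
        have habs : |e k * ⟪y, a⟫| ≤ δ/2 := by
          rw [abs_mul, abs_of_pos (he_pos k)]; exact le_of_lt hk
        rw [hF_def]
        simp only
        rw [hcalc _ habs, ← mul_assoc, he_def]
        simp only
        rw [mul_inv_cancel₀ (by positivity), one_mul]
      have hfy : f y = ⟪y, a⟫ := by
        rw [hf_def]; simp only [indicator_of_mem (interior_subset hyi)]
      rw [hfy]
      exact Tendsto.congr' (hev.mono fun k hk => hk.symm) tendsto_const_nhds
    · have hynotS : y ∉ S := fun h => hyc (subset_closure h)
      have h0I : (0:ℝ) ∉ I y := fun h => hynotS h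
      obtain ⟨δ, hδpos, hδ⟩ : ∃ δ > 0, ∀ t : ℝ, |t| < δ → t ∉ I y := by
        have hop : IsOpen (I y)ᶜ := (hIclosed y).isOpen_compl
        rcases Metric.isOpen_iff.1 hop 0 h0I with ⟨δ, hδpos, hδ⟩
        exact ⟨δ, hδpos, fun t ht => hδ (by simpa [Real.dist_eq] using ht)⟩
      have hstab : ∀ s : ℝ, |s| < δ → I y ∩ Iic s = I y ∩ Iic 0 := by
        intro s hs
        obtain ⟨habs1, habs2⟩ := abs_lt.1 hs
        ext t
        constructor
        · rintro ⟨ht1, ht2⟩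
          rw [mem_Iic] at ht2
          refine ⟨ht1, mem_Iic.2 ?_⟩
          have h2 : ¬ |t| < δ := fun h => hδ t h ht1
          rw [not_lt, le_abs] at h2
          rcases h2 with h2 | h2
          · linarith
          · linarith
        · rintro ⟨ht1, ht2⟩
          rw [mem_Iic] at ht2
          refine ⟨ht1, mem_Iic.2 ?_⟩
          have h2 : ¬ |t| < δ := fun h => hδ t h ht1
          rw [not_lt, le_abs] at h2
          rcases h2 with h2 | h2
          · linarith
          · linarith
      have hev : ∀ᶠ k in atTop, F k y = 0 := by
        have htend : Tendsto (fun k => e k * |⟪y, a⟫|) atTop (𝓝 0) := by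
          simpa using he_tend.mul_const |⟪y, a⟫|
        have hev2 : ∀ᶠ k in atTop, e k * |⟪y, a⟫| < δ :=
          htend.eventually_lt_const hδpos
        filter_upwards [hev2] with k hk
        have habs : |e k * ⟪y, a⟫| < δ := by
          rw [abs_mul, abs_of_pos (he_pos k)]; exact hk
        have hz : ν y (e k * ⟪y, a⟫) = ν y 0 := by
          rw [hν_def]; simp only; rw [hstab _ habs]
        rw [hF_def]
        simp only
        rw [hz, sub_self, mul_zero]
      have hfy : f y = 0 := by
        rw [hf_def]; simp only [indicator_of_notMem hynotS]
      rw [hfy]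
      exact Tendsto.congr' (hev.mono fun k hk => hk.symm) tendsto_const_nhds
  have htends : Tendsto (fun k => ∫ y, F k y) atTop (𝓝 (∫ y, f y)) :=
    tendsto_integral_of_dominated_convergence bound hFmeas hbound_int h_bound h_lim
  have hfin : ∫ y, f y ≤ 0 := le_of_tendsto htends (Eventually.of_forall hDk)
  have hfs : ∫ y, f y = ∫ y in S, ⟪y, a⟫ := by
    rw [hf_def, integral_indicator hSclosed.measurableSet]
  rw [← hfs]
  exact hfin

end Core2

set_option maxHeartbeats 2000000 in
set_option synthInstance.maxHeartbeats 1000000 in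
theorem stmt12 (n : ℕ) (hn : 2 ≤ n) (K : Set (EuclideanSpace ℝ (Fin n)))
    (hKcomp : IsCompact K) (hKconv : Convex ℝ K) (hKint : 0 ∈ interior K) :
    ∃ H : Submodule ℝ (EuclideanSpace ℝ (Fin n)),
      Module.finrank ℝ H = n - 1 ∧
      centroidIn (Subtype.val ⁻¹' K : Set H) = 0 := by
  classical
  haveI : Nontrivial (EuclideanSpace ℝ (Fin n)) := by
    apply Module.nontrivial_of_finrank_pos (R := ℝ)
    rw [finrank_euclideanSpace_fin]; omega
  obtain ⟨R, hRpos, hKR⟩ : ∃ r, 0 < r ∧ K ⊆ closedBall 0 r :=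
    hKcomp.isBounded.subset_closedBall_lt 0 0
  have hKfin : volume K ≠ ∞ := hKcomp.measure_lt_top.ne
  have hhalfclosed : ∀ v : EuclideanSpace ℝ (Fin n),
      IsClosed {x : EuclideanSpace ℝ (Fin n) | ⟪x, v⟫ ≤ 0} :=
    fun v => isClosed_le (Continuous.inner continuous_id continuous_const) continuous_const
  set Φ : EuclideanSpace ℝ (Fin n) → ℝ := fun v =>
    ∫ x in K, indicator {x' : EuclideanSpace ℝ (Fin n) | ⟪x', v⟫ ≤ 0} (fun _ => (1:ℝ)) x
    with hΦ_def
  have hΦval : ∀ v, Φ v = (volume (K ∩ {x | ⟪x, v⟫ ≤ 0})).toReal := by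
    intro v
    rw [hΦ_def]
    simp only
    rw [setIntegral_indicator (hhalfclosed v).measurableSet, setIntegral_const]
    rw [smul_eq_mul, mul_one]
    rfl
  -- continuity on the sphere
  have hΦcont : ContinuousOn Φ (sphere (0 : EuclideanSpace ℝ (Fin n)) 1) := by
    intro v₀ hv₀
    apply ContinuousAt.continuousWithinAt
    have hv₀1 : ‖v₀‖ = 1 := mem_sphere_zero_iff_norm.mp hv₀
    have hv₀0 : v₀ ≠ 0 := by intro h; rw [h, norm_zero] at hv₀1; norm_num at hv₀1
    have hnull : volume {x : EuclideanSpace ℝ (Fin n) | ⟪x, v₀⟫ = 0} = 0 := by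
      have hseteq : {x : EuclideanSpace ℝ (Fin n) | ⟪x, v₀⟫ = 0}
          = ((ℝ ∙ v₀)ᗮ : Submodule ℝ (EuclideanSpace ℝ (Fin n))) := by
        ext x
        rw [mem_setOf_eq, SetLike.mem_coe, Submodule.mem_orthogonal_singleton_iff_inner_left]
      rw [hseteq]
      apply Measure.addHaar_submodule
      intro htop
      have : v₀ ∈ (ℝ ∙ v₀)ᗮ := by rw [htop]; trivial
      rw [Submodule.mem_orthogonal_singleton_iff_inner_left] at this
      exact hv₀0 (inner_self_eq_zero.mp this)
    have hnull' : ∀ᵐ x ∂(volume.restrict K),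
        x ∉ {x : EuclideanSpace ℝ (Fin n) | ⟪x, v₀⟫ = 0} := by
      apply measure_eq_zero_iff_ae_notMem.mp
      exact le_antisymm (le_trans (Measure.restrict_le_self _) hnull.le) (zero_le)
    apply continuousAt_of_dominated (bound := fun _ => (1:ℝ))
    · exact Eventually.of_forall fun v =>
        (stronglyMeasurable_const.indicator (hhalfclosed v).measurableSet).aestronglyMeasurable
    · apply Eventually.of_forall
      intro v
      apply ae_of_all
      intro x
      rw [norm_indicator_eq_indicator_norm]
      by_cases hx : x ∈ {x' : EuclideanSpace ℝ (Fin n) | ⟪x', v⟫ ≤ 0}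
      · rw [indicator_of_mem hx]; simp
      · rw [indicator_of_notMem hx]; simp
    · exact integrableOn_const hKcomp.measure_lt_top.ne
    · filter_upwards [hnull'] with x hx
      rcases lt_or_gt_of_ne hx with hlt | hgt
      · have hopen : IsOpen {v : EuclideanSpace ℝ (Fin n) | ⟪x, v⟫ < 0} :=
          isOpen_lt (Continuous.inner continuous_const continuous_id) continuous_const
      -- eventually = 1
        have hev : (fun v => indicator {x' : EuclideanSpace ℝ (Fin n) | ⟪x', v⟫ ≤ 0}
            (fun _ => (1:ℝ)) x) =ᶠ[𝓝 v₀] fun _ => (1:ℝ) := by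
          filter_upwards [hopen.mem_nhds (by rw [mem_setOf_eq]; exact hlt)] with v hv
          exact indicator_of_mem (show x ∈ {x' : EuclideanSpace ℝ (Fin n) | ⟪x', v⟫ ≤ 0} from le_of_lt hv) (fun _ => (1:ℝ))
        exact (continuousAt_congr hev).mpr continuousAt_const
      · have hopen : IsOpen {v : EuclideanSpace ℝ (Fin n) | 0 < ⟪x, v⟫} :=
          isOpen_lt continuous_const (Continuous.inner continuous_const continuous_id)
        have hev : (fun v => indicator {x' : EuclideanSpace ℝ (Fin n) | ⟪x', v⟫ ≤ 0}
            (fun _ => (1:ℝ)) x) =ᶠ[𝓝 v₀] fun _ => (0:ℝ) := by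
          filter_upwards [hopen.mem_nhds hgt] with v hv
          exact indicator_of_notMem (show x ∉ {x' : EuclideanSpace ℝ (Fin n) | ⟪x', v⟫ ≤ 0} from by rw [mem_setOf_eq]; exact not_le.2 hv) (fun _ => (1:ℝ))
        exact (continuousAt_congr hev).mpr continuousAt_const
  -- maximizer on the sphere
  obtain ⟨u, huS, humax⟩ := (isCompact_sphere (0 : EuclideanSpace ℝ (Fin n)) 1).exists_isMaxOn
    (NormedSpace.sphere_nonempty.mpr zero_le_one) hΦcont
  have hu1 : ‖u‖ = 1 := mem_sphere_zero_iff_norm.mp huS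
  have hu0 : u ≠ 0 := by intro h; rw [h, norm_zero] at hu1; norm_num at hu1
  have huu : ⟪u, u⟫ = 1 := by
    rw [real_inner_self_eq_norm_mul_norm, hu1, mul_one]
  refine ⟨(ℝ ∙ u)ᗮ, ?_, ?_⟩
  · have h2 : Module.finrank ℝ (ℝ ∙ u) = 1 := finrank_span_singleton hu0
    have h3 : Module.finrank ℝ (ℝ ∙ u)ᗮ + 1 = n := by
      rw [← h2, add_comm, Submodule.finrank_add_finrank_orthogonal]
      simp [finrank_euclideanSpace_fin]
    omega
  -- main part
  set Hu := (ℝ ∙ u)ᗮ with hHu_def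
  have horth : ∀ y : Hu, ⟪(y : EuclideanSpace ℝ (Fin n)), u⟫ = 0 := by
    intro y
    have hy : (y : EuclideanSpace ℝ (Fin n)) ∈ (ℝ ∙ u)ᗮ := y.2
    rw [Submodule.mem_orthogonal] at hy
    have h := hy u (Submodule.mem_span_singleton_self u)
    rwa [real_inner_comm] at h
  set φ : (Hu × ℝ) →ₗ[ℝ] EuclideanSpace ℝ (Fin n) :=
    Hu.subtype.comp (LinearMap.fst ℝ Hu ℝ) + (LinearMap.snd ℝ Hu ℝ).smulRight u with hφ_def
  have hφapp : ∀ (y : Hu) (t : ℝ),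
      φ (y, t) = (y : EuclideanSpace ℝ (Fin n)) + t • u := fun y t => rfl
  have hinn1 : ∀ (y : Hu) (t : ℝ), ⟪(y : EuclideanSpace ℝ (Fin n)) + t • u, u⟫ = t := by
    intro y t
    rw [inner_add_left, horth, real_inner_smul_left, huu]; ring
  have hinn2 : ∀ (y : Hu) (t : ℝ) (a : Hu),
      ⟪(y : EuclideanSpace ℝ (Fin n)) + t • u, (a : EuclideanSpace ℝ (Fin n))⟫ = ⟪y, a⟫ := by
    intro y t a
    rw [inner_add_left, real_inner_smul_left]
    have h1 : ⟪u, (a : EuclideanSpace ℝ (Fin n))⟫ = 0 := by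
      rw [real_inner_comm]; exact horth a
    have h2 : ⟪(y : EuclideanSpace ℝ (Fin n)), (a : EuclideanSpace ℝ (Fin n))⟫ = ⟪y, a⟫ :=
      (Submodule.coe_inner Hu y a).symm
    rw [h1, h2]; ring
  have hφbij : Function.Bijective φ := by
    constructor
    · intro p q hpq
      obtain ⟨y, t⟩ := p
      obtain ⟨z, s⟩ := q
      rw [hφapp, hφapp] at hpq
      have ht : t = s := by
        have := congrArg (fun x => ⟪x, u⟫) hpq
        simpa [hinn1] using this
      subst ht
      have hy : (y : EuclideanSpace ℝ (Fin n)) = z := by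
        have := add_right_cancel hpq
        exact this
      exact Prod.ext (Subtype.ext hy) rfl
    · intro x
      have hy : x - ⟪x, u⟫ • u ∈ Hu := by
        rw [hHu_def, Submodule.mem_orthogonal]
        rintro w hw
        rw [Submodule.mem_span_singleton] at hw
        obtain ⟨r, rfl⟩ := hw
        rw [real_inner_smul_left, inner_sub_right, real_inner_smul_right, huu,
          real_inner_comm]
        ring
      refine ⟨(⟨x - ⟪x, u⟫ • u, hy⟩, ⟪x, u⟫), ?_⟩
      rw [hφapp]
      simp
  set Ψl := LinearEquiv.ofBijective φ hφbij with hΨl_def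
  set Ψ := Ψl.toContinuousLinearEquiv with hΨ_def
  have hΨapp : ∀ (y : Hu) (t : ℝ),
      Ψ (y, t) = (y : EuclideanSpace ℝ (Fin n)) + t • u := fun y t => rfl
  haveI hHaarProd : Measure.IsAddHaarMeasure (volume : Measure (Hu × ℝ)) := by
    rw [Measure.volume_eq_prod]; infer_instance
  set c := Measure.addHaarScalarFactor ((volume : Measure (Hu × ℝ)).map Ψ) volume with hc_def
  have hmapeq : (volume : Measure (Hu × ℝ)).map Ψ = c • volume :=
    Measure.isAddLeftInvariant_eq_smul _ _
  have hΨmeas : Measurable Ψ := Ψ.continuous.measurable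
  have hpre : ∀ B : Set (EuclideanSpace ℝ (Fin n)), MeasurableSet B →
      volume (Ψ ⁻¹' B) = (c : ℝ≥0∞) * volume B := by
    intro B hB
    have h1 := Measure.map_apply (μ := (volume : Measure (Hu × ℝ))) hΨmeas hB
    rw [hmapeq] at h1
    rw [← h1, Measure.smul_apply, ENNReal.smul_def, smul_eq_mul]
  set Q := Ψ ⁻¹' K with hQ_def
  have hQcomp : IsCompact Q := by
    have hQi : Q = Ψ.symm '' K := by
      rw [hQ_def, ← ContinuousLinearEquiv.image_symm_eq_preimage]
    rw [hQi]
    exact hKcomp.image Ψ.symm.continuous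
  have hQconv : Convex ℝ Q := by
    have : Q = φ ⁻¹' K := rfl
    rw [this]
    exact hKconv.linear_preimage φ
  have hQ0 : (0 : Hu × ℝ) ∈ interior Q := by
    have hop : IsOpen (Ψ ⁻¹' interior K) := isOpen_interior.preimage Ψ.continuous
    have hsub : Ψ ⁻¹' interior K ⊆ Q := preimage_mono interior_subset
    have h0m : (0 : Hu × ℝ) ∈ Ψ ⁻¹' interior K := by
      show Ψ 0 ∈ interior K
      rw [map_zero]; exact hKint
    exact interior_maximal hsub hop h0m
  have hkey : ∀ a : Hu, ∫ y in {z : Hu | (z, 0) ∈ Q}, ⟪y, a⟫ ≤ 0 := by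
    intro a
    apply core_estimate Q hQcomp hQconv hQ0 a
    intro ε hε
    -- identify the tilted sets
    have hset : ∀ δ : ℝ, {p : Hu × ℝ | p ∈ Q ∧ p.2 ≤ δ * ⟪p.1, a⟫}
        = Ψ ⁻¹' (K ∩ {x | ⟪x, u⟫ - δ * ⟪x, (a : EuclideanSpace ℝ (Fin n))⟫ ≤ 0}) := by
      intro δ
      ext ⟨y, t⟩
      simp only [mem_setOf_eq, mem_preimage, mem_inter_iff, hΨapp, hinn1, hinn2]
      constructor
      · rintro ⟨h1, h2⟩; exact ⟨h1, by linarith⟩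
      · rintro ⟨h1, h2⟩; exact ⟨h1, by linarith⟩
    have hmeasδ : ∀ δ : ℝ, MeasurableSet
        (K ∩ {x : EuclideanSpace ℝ (Fin n) | ⟪x, u⟫ - δ * ⟪x, (a : EuclideanSpace ℝ (Fin n))⟫ ≤ 0}) := by
      intro δ
      apply (hKcomp.isClosed.inter ?_).measurableSet
      apply isClosed_le ?_ continuous_const
      apply Continuous.sub
      · exact Continuous.inner continuous_id continuous_const
      · exact continuous_const.mul (Continuous.inner continuous_id continuous_const)
    have hvol : ∀ δ : ℝ, volume {p : Hu × ℝ | p ∈ Q ∧ p.2 ≤ δ * ⟪p.1, a⟫}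
        = (c : ℝ≥0∞) * volume
            (K ∩ {x | ⟪x, u⟫ - δ * ⟪x, (a : EuclideanSpace ℝ (Fin n))⟫ ≤ 0}) := by
      intro δ
      rw [hset δ]
      exact hpre _ (hmeasδ δ)
    -- maximality transfer
    set w := u - ε • (a : EuclideanSpace ℝ (Fin n)) with hw_def
    have hwu : ⟪w, u⟫ = 1 := by
      rw [hw_def, inner_sub_left, real_inner_smul_left, huu]
      have : ⟪(a : EuclideanSpace ℝ (Fin n)), u⟫ = 0 := horth a
      rw [this]; ring
    have hw0 : w ≠ 0 := by
      intro h
      rw [h, inner_zero_left] at hwu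
      norm_num at hwu
    have hwpos : 0 < ‖w‖ := norm_pos_iff.2 hw0
    have hsphere : ‖w‖⁻¹ • w ∈ sphere (0 : EuclideanSpace ℝ (Fin n)) 1 := by
      rw [mem_sphere_zero_iff_norm, norm_smul, norm_inv, norm_norm,
        inv_mul_cancel₀ (ne_of_gt hwpos)]
    have hΦle : Φ (‖w‖⁻¹ • w) ≤ Φ u := humax hsphere
    have hseteq : {x : EuclideanSpace ℝ (Fin n) | ⟪x, ‖w‖⁻¹ • w⟫ ≤ 0}
        = {x : EuclideanSpace ℝ (Fin n) | ⟪x, u⟫ - ε * ⟪x, (a : EuclideanSpace ℝ (Fin n))⟫ ≤ 0} := by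
      ext x
      rw [mem_setOf_eq, mem_setOf_eq, real_inner_smul_right]
      have hinv : 0 < ‖w‖⁻¹ := inv_pos.2 hwpos
      have hxw : ⟪x, w⟫ = ⟪x, u⟫ - ε * ⟪x, (a : EuclideanSpace ℝ (Fin n))⟫ := by
        rw [hw_def, inner_sub_right, real_inner_smul_right]
      rw [← hxw]
      constructor
      · intro h; nlinarith
      · intro h; nlinarith
    have hfinε : ∀ δ : ℝ, volume
        (K ∩ {x : EuclideanSpace ℝ (Fin n) | ⟪x, u⟫ - δ * ⟪x, (a : EuclideanSpace ℝ (Fin n))⟫ ≤ 0}) ≠ ∞ :=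
      fun δ => ne_top_of_le_ne_top hKfin (measure_mono inter_subset_left)
    have hu_eq : {x : EuclideanSpace ℝ (Fin n) | ⟪x, u⟫ ≤ 0}
        = {x : EuclideanSpace ℝ (Fin n) | ⟪x, u⟫ - 0 * ⟪x, (a : EuclideanSpace ℝ (Fin n))⟫ ≤ 0} := by
      ext x; simp
    have hvle : volume (K ∩ {x : EuclideanSpace ℝ (Fin n) |
          ⟪x, u⟫ - ε * ⟪x, (a : EuclideanSpace ℝ (Fin n))⟫ ≤ 0})
        ≤ volume (K ∩ {x : EuclideanSpace ℝ (Fin n) |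
          ⟪x, u⟫ - 0 * ⟪x, (a : EuclideanSpace ℝ (Fin n))⟫ ≤ 0}) := by
      have h1 := hΦle
      rw [hΦval, hΦval, hseteq, hu_eq] at h1
      exact (ENNReal.toReal_le_toReal (hfinε ε) (hfinε 0)).1 h1
    rw [hvol ε, hvol 0]
    exact mul_le_mul_right hvle _
  -- conclusion
  have hSL : {z : Hu | (z, 0) ∈ Q} = (Subtype.val ⁻¹' K : Set Hu) := by
    ext y
    simp only [mem_setOf_eq, hQ_def, mem_preimage, hΨapp, zero_smul, add_zero]
  have hzero : ∀ a : Hu, ∫ y in (Subtype.val ⁻¹' K : Set Hu), ⟪y, a⟫ = 0 := by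
    intro a
    have h1 := hkey a
    have h2 := hkey (-a)
    rw [hSL] at h1 h2
    have h3 : ∫ y in (Subtype.val ⁻¹' K : Set Hu), ⟪y, -a⟫
        = - ∫ y in (Subtype.val ⁻¹' K : Set Hu), ⟪y, a⟫ := by
      rw [← integral_neg]
      apply integral_congr_ae
      filter_upwards with y
      rw [inner_neg_right]
    rw [h3] at h2
    linarith
  set L := (Subtype.val ⁻¹' K : Set Hu) with hL_def
  have hLcomp : IsCompact L := by
    apply Metric.isCompact_of_isClosed_isBounded
    · exact hKcomp.isClosed.preimage continuous_subtype_val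
    · apply (isBounded_closedBall (x := (0 : Hu)) (r := R)).subset
      intro y hy
      rw [mem_closedBall, dist_zero_right]
      have h1 : (y : EuclideanSpace ℝ (Fin n)) ∈ K := hy
      have h2 := hKR h1
      rw [mem_closedBall, dist_zero_right] at h2
      exact h2
  have hInt : IntegrableOn (fun y : Hu => y) L volume :=
    ContinuousOn.integrableOn_compact hLcomp continuousOn_id
  have hI0 : (∫ y in L, y : Hu) = 0 := by
    set Iv : Hu := ∫ y in L, y with hIv_def
    have h4 : ⟪Iv, (∫ y in L, y : Hu)⟫ = ∫ y in L, ⟪Iv, y⟫ := (integral_inner hInt Iv).symm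
    rw [← hIv_def] at h4
    have h5 : ∫ y in L, ⟪Iv, y⟫ = ∫ y in L, ⟪y, Iv⟫ := by
      apply integral_congr_ae
      filter_upwards with y
      rw [real_inner_comm]
    have h6 : ⟪Iv, Iv⟫ = 0 := by rw [h4, h5]; exact hzero Iv
    exact inner_self_eq_zero.mp h6
  show centroidIn L = 0
  unfold centroidIn
  rw [hI0, smul_zero]
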